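/- For an integer n ≥ 2, let R_{1,n} be the C*-algebra of continuous functions f : [0,1] → M_n(ℂ) such that f(0) = λ·(1_{n−1} ⊕ 0) and f(1) = λ·1_n for a single scalar λ ∈ ℂ (the same λ at both endpoints), and let B be the C*-algebra of continuous functions f : [0,1] → M_n(ℂ) such that f(1) = 0 and f(0) = 0_{n−1} ⊕ μ for some scalar μ ∈ ℂ. Then the minimal unitization of R_{1,n} is *-isomorphic to the minimal unitization of B. -/

import Mathlib

open Matrix

noncomputable section

/-- The diagonal `n × n` projection `1_{n−1} ⊕ 0` with `1` in the first `n − 1`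
diagonal entries. -/
def diagProj (n : ℕ) : Matrix (Fin n) (Fin n) ℂ :=
  Matrix.diagonal fun i => if (i : ℕ) < n - 1 then (1 : ℂ) else 0

/-- The diagonal `n × n` projection `0_{n−1} ⊕ 1` with `1` in the last diagonal entry. -/
def lastProj (n : ℕ) : Matrix (Fin n) (Fin n) ℂ :=
  Matrix.diagonal fun i => if (i : ℕ) = n - 1 then (1 : ℂ) else 0

lemma diagProj_mul_self (n : ℕ) : diagProj n * diagProj n = diagProj n := by
  have h : (fun i : Fin n => (if (i : ℕ) < n - 1 then (1 : ℂ) else 0) *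
      (if (i : ℕ) < n - 1 then (1 : ℂ) else 0)) =
      fun i : Fin n => if (i : ℕ) < n - 1 then (1 : ℂ) else 0 := by
    funext i; by_cases h : (i : ℕ) < n - 1 <;> simp [h]
  rw [diagProj, Matrix.diagonal_mul_diagonal, h]

lemma diagProj_star (n : ℕ) : star (diagProj n) = diagProj n := by
  have h : (star fun i : Fin n => if (i : ℕ) < n - 1 then (1 : ℂ) else 0) =
      fun i : Fin n => if (i : ℕ) < n - 1 then (1 : ℂ) else 0 := by
    funext i; by_cases h : (i : ℕ) < n - 1 <;> simp [h]
  rw [diagProj, Matrix.star_eq_conjTranspose, Matrix.diagonal_conjTranspose, h]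

lemma lastProj_mul_self (n : ℕ) : lastProj n * lastProj n = lastProj n := by
  have h : (fun i : Fin n => (if (i : ℕ) = n - 1 then (1 : ℂ) else 0) *
      (if (i : ℕ) = n - 1 then (1 : ℂ) else 0)) =
      fun i : Fin n => if (i : ℕ) = n - 1 then (1 : ℂ) else 0 := by
    funext i; by_cases h : (i : ℕ) = n - 1 <;> simp [h]
  rw [lastProj, Matrix.diagonal_mul_diagonal, h]

lemma lastProj_star (n : ℕ) : star (lastProj n) = lastProj n := by
  have h : (star fun i : Fin n => if (i : ℕ) = n - 1 then (1 : ℂ) else 0) =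
      fun i : Fin n => if (i : ℕ) = n - 1 then (1 : ℂ) else 0 := by
    funext i; by_cases h : (i : ℕ) = n - 1 <;> simp [h]
  rw [lastProj, Matrix.star_eq_conjTranspose, Matrix.diagonal_conjTranspose, h]

/-- Razak's building block `R_{1,n}`: continuous functions `f : [0,1] → M_n(ℂ)` with
`f 0 = λ·(1_{n−1} ⊕ 0)` and `f 1 = λ·1_n` for a single scalar `λ ∈ ℂ`. -/
def Razak (n : ℕ) :
    NonUnitalStarSubalgebra ℂ C(unitInterval, Matrix (Fin n) (Fin n) ℂ) where
  carrier := {f | ∃ lam : ℂ,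
    f 0 = lam • diagProj n ∧ f 1 = lam • (1 : Matrix (Fin n) (Fin n) ℂ)}
  add_mem' := by
    rintro f g ⟨l₁, h₁0, h₁1⟩ ⟨l₂, h₂0, h₂1⟩
    exact ⟨l₁ + l₂, by simp [h₁0, h₂0, add_smul], by simp [h₁1, h₂1, add_smul]⟩
  zero_mem' := ⟨0, by simp, by simp⟩
  mul_mem' := by
    rintro f g ⟨l₁, h₁0, h₁1⟩ ⟨l₂, h₂0, h₂1⟩
    refine ⟨l₁ * l₂, ?_, ?_⟩
    · rw [ContinuousMap.mul_apply, h₁0, h₂0, smul_mul_smul_comm, diagProj_mul_self]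
    · rw [ContinuousMap.mul_apply, h₁1, h₂1, smul_mul_smul_comm, one_mul]
  smul_mem' := by
    rintro c f ⟨l, h0, h1⟩
    exact ⟨c * l, by simp [h0, smul_smul], by simp [h1, smul_smul]⟩
  star_mem' := by
    rintro f ⟨l, h0, h1⟩
    refine ⟨star l, ?_, ?_⟩
    · rw [ContinuousMap.star_apply, h0, star_smul, diagProj_star]
    · rw [ContinuousMap.star_apply, h1, star_smul, star_one]

/-- The algebra `B` of continuous functions `f : [0,1] → M_n(ℂ)` with `f 1 = 0` and
`f 0 = 0_{n−1} ⊕ μ` for some `μ ∈ ℂ`. -/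
def Bn (n : ℕ) :
    NonUnitalStarSubalgebra ℂ C(unitInterval, Matrix (Fin n) (Fin n) ℂ) where
  carrier := {f | f 1 = 0 ∧ ∃ μ : ℂ, f 0 = μ • lastProj n}
  add_mem' := by
    rintro f g ⟨h₁1, μ₁, h₁0⟩ ⟨h₂1, μ₂, h₂0⟩
    exact ⟨by simp [h₁1, h₂1], μ₁ + μ₂, by simp [h₁0, h₂0, add_smul]⟩
  zero_mem' := ⟨by simp, 0, by simp⟩
  mul_mem' := by
    rintro f g ⟨h₁1, μ₁, h₁0⟩ ⟨h₂1, μ₂, h₂0⟩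
    refine ⟨by simp [h₁1, h₂1], μ₁ * μ₂, ?_⟩
    rw [ContinuousMap.mul_apply, h₁0, h₂0, smul_mul_smul_comm, lastProj_mul_self]
  smul_mem' := by
    rintro c f ⟨h1, μ, h0⟩
    exact ⟨by simp [h1], c * μ, by simp [h0, smul_smul]⟩
  star_mem' := by
    rintro f ⟨h1, μ, h0⟩
    refine ⟨by simp [h1], star μ, ?_⟩
    rw [ContinuousMap.star_apply, h0, star_smul, lastProj_star]

lemma proj_sum (n : ℕ) : diagProj n + lastProj n = 1 := by
  ext i j
  rcases eq_or_ne i j with rfl | hij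
  · have hi := i.isLt
    by_cases h : (i : ℕ) < n - 1
    · have h' : (i : ℕ) ≠ n - 1 := by omega
      simp [diagProj, lastProj, Matrix.add_apply, Matrix.one_apply, h, h']
    · have h' : (i : ℕ) = n - 1 := by omega
      simp [diagProj, lastProj, Matrix.add_apply, Matrix.one_apply, h, h']
  · simp [diagProj, lastProj, Matrix.add_apply, Matrix.diagonal_apply_ne _ hij,
      Matrix.one_apply_ne hij]

lemma sub_smul_one_mem_Bn (n : ℕ) {a : C(unitInterval, Matrix (Fin n) (Fin n) ℂ)} {l : ℂ}
    (h0 : a 0 = l • diagProj n) (h1 : a 1 = l • (1 : Matrix (Fin n) (Fin n) ℂ)) :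
    a - l • 1 ∈ Bn n := by
  refine ⟨?_, -l, ?_⟩
  · simp [h1]
  · simp only [ContinuousMap.sub_apply, ContinuousMap.smul_apply, ContinuousMap.one_apply, h0]
    rw [← proj_sum n, smul_add, neg_smul]
    abel

lemma sub_smul_one_mem_Razak (n : ℕ) {b : C(unitInterval, Matrix (Fin n) (Fin n) ℂ)} {μ : ℂ}
    (h1 : b 1 = 0) (h0 : b 0 = μ • lastProj n) :
    b - μ • 1 ∈ Razak n := by
  refine ⟨-μ, ?_, ?_⟩
  · simp only [ContinuousMap.sub_apply, ContinuousMap.smul_apply, ContinuousMap.one_apply, h0]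
    rw [← proj_sum n, smul_add, neg_smul]
    abel
  · simp [h1]

abbrev MC (n : ℕ) := C(unitInterval, Matrix (Fin n) (Fin n) ℂ)

/-- The canonical embedding of the unitization of `Razak n`. -/
def razakHom (n : ℕ) : Unitization ℂ (Razak n) →⋆ₐ[ℂ] MC n :=
  Unitization.starLift (NonUnitalStarSubalgebraClass.subtype (Razak n))

/-- The canonical embedding of the unitization of `Bn n`. -/
def bnHom (n : ℕ) : Unitization ℂ (Bn n) →⋆ₐ[ℂ] MC n :=
  Unitization.starLift (NonUnitalStarSubalgebraClass.subtype (Bn n))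

lemma razakHom_apply (n : ℕ) (x : Unitization ℂ (Razak n)) :
    razakHom n x = algebraMap ℂ (MC n) x.fst + (x.snd : MC n) :=
  rfl

lemma bnHom_apply (n : ℕ) (x : Unitization ℂ (Bn n)) :
    bnHom n x = algebraMap ℂ (MC n) x.fst + (x.snd : MC n) :=
  rfl

set_option maxHeartbeats 1000000 in
set_option synthInstance.maxHeartbeats 1000000 in
lemma razak_aux (n : ℕ) (hn : 2 ≤ n) :
    Nonempty (Unitization ℂ (Razak n) ≃⋆ₐ[ℂ] Unitization ℂ (Bn n)) := by
  classical
  have hΦ := razakHom_apply n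
  have hΨ := bnHom_apply n
  have hlast : n - 1 < n := by omega
  have hΦinj : Function.Injective (razakHom n) := by
    rw [injective_iff_map_eq_zero]
    intro x hx
    rw [hΦ] at hx
    obtain ⟨l, h0, h1⟩ := x.snd.2
    have hval : (x.snd : MC n) = -(algebraMap ℂ (MC n) x.fst) := by
      rw [eq_neg_iff_add_eq_zero, add_comm]; exact hx
    have h0' : l • diagProj n = -(x.fst • (1 : Matrix (Fin n) (Fin n) ℂ)) := by
      have := congrArg (fun f : MC n => f 0) hval
      simpa [Algebra.algebraMap_eq_smul_one, h0] using this
    have hfst : x.fst = 0 := by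
      have := congrArg (fun M : Matrix (Fin n) (Fin n) ℂ =>
        M ⟨n - 1, hlast⟩ ⟨n - 1, hlast⟩) h0'
      simpa [diagProj, Matrix.diagonal_apply_eq, Matrix.one_apply] using this
    have hsnd : (x.snd : MC n) = 0 := by rw [hval, hfst, map_zero, neg_zero]
    have hsnd' : x.snd = 0 := Subtype.coe_injective (by simpa using hsnd)
    rw [← Unitization.inl_fst_add_inr_snd_eq x, hfst, hsnd']
    simp
  have hΨinj : Function.Injective (bnHom n) := by
    rw [injective_iff_map_eq_zero]
    intro x hx
    rw [hΨ] at hx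
    obtain ⟨h1, μ, h0⟩ := x.snd.2
    have hval : (x.snd : MC n) = -(algebraMap ℂ (MC n) x.fst) := by
      rw [eq_neg_iff_add_eq_zero, add_comm]; exact hx
    have h1' : (0 : Matrix (Fin n) (Fin n) ℂ) = -(x.fst • 1) := by
      have := congrArg (fun f : MC n => f 1) hval
      simpa [Algebra.algebraMap_eq_smul_one, h1] using this
    have hfst : x.fst = 0 := by
      have := congrArg (fun M : Matrix (Fin n) (Fin n) ℂ =>
        M ⟨n - 1, hlast⟩ ⟨n - 1, hlast⟩) h1'
      simpa [Matrix.one_apply] using this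
    have hsnd : (x.snd : MC n) = 0 := by rw [hval, hfst, map_zero, neg_zero]
    have hsnd' : x.snd = 0 := Subtype.coe_injective (by simpa using hsnd)
    rw [← Unitization.inl_fst_add_inr_snd_eq x, hfst, hsnd']
    simp
  have hrange : (razakHom n).range = (bnHom n).range := by
    apply le_antisymm
    · rintro f ⟨x, rfl⟩
      obtain ⟨l, h0, h1⟩ := x.snd.2
      refine ⟨(Unitization.inl (x.fst + l) : Unitization ℂ (Bn n)) +
        (⟨(x.snd : MC n) - l • 1, sub_smul_one_mem_Bn n h0 h1⟩ : Bn n), ?_⟩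
      show bnHom n _ = razakHom n _
      rw [hΨ, hΦ]
      simp only [Unitization.fst_add, Unitization.fst_inl, Unitization.fst_inr,
        Unitization.snd_add, Unitization.snd_inl, Unitization.snd_inr, add_zero, zero_add,
        map_add, Algebra.algebraMap_eq_smul_one]
      abel
    · rintro f ⟨x, rfl⟩
      obtain ⟨h1, μ, h0⟩ := x.snd.2
      refine ⟨(Unitization.inl (x.fst + μ) : Unitization ℂ (Razak n)) +
        (⟨(x.snd : MC n) - μ • 1, sub_smul_one_mem_Razak n h1 h0⟩ : Razak n), ?_⟩
      show razakHom n _ = bnHom n _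
      rw [hΦ, hΨ]
      simp only [Unitization.fst_add, Unitization.fst_inl, Unitization.fst_inr,
        Unitization.snd_add, Unitization.snd_inl, Unitization.snd_inr, add_zero, zero_add,
        map_add, Algebra.algebraMap_eq_smul_one]
      abel
  exact ⟨((hrange ▸ StarAlgEquiv.ofInjective (razakHom n) hΦinj :
      Unitization ℂ (Razak n) ≃⋆ₐ[ℂ] (bnHom n).range)).trans
    (StarAlgEquiv.ofInjective (bnHom n) hΨinj).symm⟩

/-- The minimal unitization of Razak's building block `R_{1,n}` is ∗-isomorphic to the
minimal unitization of `B = {f ∈ C([0,1], Mₙ(ℂ)) : f 1 = 0, f 0 ∈ ℂ·E_{nn}}`. -/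
theorem unitization_razak_iso (n : ℕ) (hn : 2 ≤ n) :
    Nonempty (Unitization ℂ (Razak n) ≃⋆ₐ[ℂ] Unitization ℂ (Bn n)) :=
  razak_aux n hn
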